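/- Let p ≥ 2 be an integer, ε ∈ ℝ, τ > 0, s > 0, and suppose σ₁ > (1 + (p−1)τ|ε|)/s and σ_i > (1 + (p−2)τ² + τ|ε|)/s for all i = 2,…,p. Then the p×p real symmetric matrix M defined by M₁₁ = σ₁ − 1/s, M_ii = σ_i − 1/s for i = 2,…,p, M₁ⱼ = M_{j1} = −τε/s for j = 2,…,p, and M_ij = −τ²/s for i ≠ j with i,j ≥ 2, is positive definite. -/

import Mathlib

open Matrix Finset

private lemma key_ite {n : Type*} [Fintype n] [DecidableEq n] (f : n → ℝ) (i : n) :
    ∑ j ∈ Finset.univ.erase i, f j = ∑ j, if j = i then 0 else f j := by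
  rw [← Finset.add_sum_erase _ _ (Finset.mem_univ i), if_pos rfl, zero_add]
  exact Finset.sum_congr rfl fun j hj => (if_neg (Finset.ne_of_mem_erase hj)).symm

lemma posDef_of_diag_dominant {n : Type*} [Fintype n] [DecidableEq n]
    (M : Matrix n n ℝ) (hsym : ∀ i j, M j i = M i j)
    (hdom : ∀ i, ∑ j ∈ Finset.univ.erase i, |M i j| < M i i) :
    M.PosDef := by
  rw [Matrix.posDef_iff_dotProduct_mulVec]
  refine ⟨?_, ?_⟩
  · ext i j
    simp [Matrix.conjTranspose_apply, hsym]
  · intro x hx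
    obtain ⟨i₀, hi₀⟩ : ∃ i, x i ≠ 0 := by
      by_contra h; push_neg at h; exact hx (funext h)
    have hquad : star x ⬝ᵥ M *ᵥ x = ∑ i, ∑ j, x i * M i j * x j := by
      simp [dotProduct, Matrix.mulVec, Finset.mul_sum, mul_assoc]
    rw [hquad]
    have step1 : ∑ i, ∑ j, (if j = i then M i i * x i ^ 2
        else -(|M i j| * (x i ^ 2 + x j ^ 2) / 2)) ≤ ∑ i, ∑ j, x i * M i j * x j := by
      refine Finset.sum_le_sum fun i _ => Finset.sum_le_sum fun j _ => ?_
      by_cases hij : j = i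
      · subst hij
        rw [if_pos rfl]
        nlinarith [sq_nonneg (x j), sq_abs (x j)]
      · simp only [if_neg hij]
        have h2 : |x i| * |x j| ≤ (x i ^ 2 + x j ^ 2) / 2 := by
          nlinarith [sq_nonneg (|x i| - |x j|), sq_abs (x i), sq_abs (x j)]
        have h1 : |x i * M i j * x j| ≤ |M i j| * (x i ^ 2 + x j ^ 2) / 2 := by
          calc |x i * M i j * x j| = |M i j| * (|x i| * |x j|) := by
                rw [abs_mul, abs_mul]; ring
            _ ≤ |M i j| * ((x i ^ 2 + x j ^ 2) / 2) :=
                mul_le_mul_of_nonneg_left h2 (abs_nonneg _)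
            _ = |M i j| * (x i ^ 2 + x j ^ 2) / 2 := by ring
        linarith [neg_abs_le (x i * M i j * x j)]
    refine lt_of_lt_of_le ?_ step1
    have split : ∀ i : n, ∑ j, (if j = i then M i i * x i ^ 2
        else -(|M i j| * (x i ^ 2 + x j ^ 2) / 2))
        = M i i * x i ^ 2
          - (∑ j ∈ univ.erase i, |M i j|) * x i ^ 2 / 2
          - (∑ j ∈ univ.erase i, |M i j| * x j ^ 2) / 2 := by
      intro i
      rw [← Finset.add_sum_erase _ _ (Finset.mem_univ i), if_pos rfl]
      rw [Finset.sum_congr rfl (fun j hj => if_neg (Finset.ne_of_mem_erase hj))]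
      have e1 : ∑ j ∈ univ.erase i, -(|M i j| * (x i ^ 2 + x j ^ 2) / 2)
          = -(((∑ j ∈ univ.erase i, |M i j|) * x i ^ 2
              + ∑ j ∈ univ.erase i, |M i j| * x j ^ 2) / 2) := by
        rw [Finset.sum_neg_distrib, Finset.sum_mul, ← Finset.sum_add_distrib, ← Finset.sum_div]
        congr 1; congr 1
        exact Finset.sum_congr rfl fun j _ => by ring
      rw [e1]; ring
    rw [Finset.sum_congr rfl fun i _ => split i]
    have swap : ∑ i, ∑ j ∈ univ.erase i, |M i j| * x j ^ 2
        = ∑ i, (∑ j ∈ univ.erase i, |M i j|) * x i ^ 2 := by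
      rw [Finset.sum_congr rfl fun i _ => key_ite (fun j => |M i j| * x j ^ 2) i,
        Finset.sum_comm]
      refine Finset.sum_congr rfl fun j _ => ?_
      rw [show (∑ i, if j = i then 0 else |M i j| * x j ^ 2)
            = ∑ i, if i = j then 0 else |M j i| * x j ^ 2 from
          Finset.sum_congr rfl fun i _ => by rw [hsym]; exact if_congr eq_comm rfl rfl,
        ← key_ite (fun i => |M j i| * x j ^ 2) j, ← Finset.sum_mul]
    have final : ∑ i, (M i i * x i ^ 2
          - (∑ j ∈ univ.erase i, |M i j|) * x i ^ 2 / 2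
          - (∑ j ∈ univ.erase i, |M i j| * x j ^ 2) / 2)
        = ∑ i, (M i i - ∑ j ∈ univ.erase i, |M i j|) * x i ^ 2 := by
      have e : ∀ (A B C : n → ℝ), ∑ i, (A i - B i / 2 - C i / 2)
          = ∑ i, A i - (∑ i, B i) / 2 - (∑ i, C i) / 2 := by
        intro A B C
        rw [Finset.sum_sub_distrib, Finset.sum_sub_distrib, Finset.sum_div, Finset.sum_div]
      rw [e, swap]
      have e2 : ∑ i, (M i i - ∑ j ∈ univ.erase i, |M i j|) * x i ^ 2
          = ∑ i, M i i * x i ^ 2 - ∑ i, (∑ j ∈ univ.erase i, |M i j|) * x i ^ 2 := by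
        rw [← Finset.sum_sub_distrib]
        exact Finset.sum_congr rfl fun i _ => by ring
      rw [e2]; ring
    rw [final]
    refine Finset.sum_pos' (fun i _ => ?_) ⟨i₀, Finset.mem_univ i₀, ?_⟩
    · have h := hdom i
      exact mul_nonneg (by linarith) (sq_nonneg _)
    · have h := hdom i₀
      have : 0 < x i₀ ^ 2 := by positivity
      nlinarith



/-- The nontrivial diagonal block of the congruence-transformed proximal matrix is
positive definite on the parameter region 𝒦. -/
theorem transformed_block_posDef
    (p : ℕ) [NeZero p] (hp : 2 ≤ p)
    (ε τ s : ℝ) (hτ : 0 < τ) (hs : 0 < s)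
    (σ : Fin p → ℝ)
    (hσ1 : σ 0 > (1 + ((p : ℝ) - 1) * τ * |ε|) / s)
    (hσi : ∀ i : Fin p, i ≠ 0 → σ i > (1 + ((p : ℝ) - 2) * τ ^ 2 + τ * |ε|) / s)
    (M : Matrix (Fin p) (Fin p) ℝ)
    (hM : ∀ i j, M i j =
      if i = j then σ i - 1 / s
      else if i = 0 ∨ j = 0 then -(τ * ε) / s
      else -(τ ^ 2) / s) :
    M.PosDef := by
  have habs1 : |(-(τ * ε) / s)| = τ * |ε| / s := by
    rw [abs_div, abs_neg, abs_mul, abs_of_pos hτ, abs_of_pos hs]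
  have habs2 : |(-(τ ^ 2) / s)| = τ ^ 2 / s := by
    rw [abs_div, abs_neg, abs_of_pos hs, abs_of_nonneg (sq_nonneg τ)]
  apply posDef_of_diag_dominant
  · intro i j
    rw [hM, hM]
    by_cases hij : i = j
    · subst hij; rfl
    · rw [if_neg (Ne.symm hij), if_neg hij]
      exact if_congr or_comm rfl rfl
  · intro i
    by_cases hi : i = 0
    · subst hi
      have hdiag : M 0 0 = σ 0 - 1 / s := by rw [hM, if_pos rfl]
      have hsum : ∑ j ∈ univ.erase (0 : Fin p), |M 0 j| = ((p : ℝ) - 1) * (τ * |ε| / s) := by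
        rw [Finset.sum_congr rfl (fun j hj => ?_), Finset.sum_const,
          Finset.card_erase_of_mem (Finset.mem_univ _), Finset.card_fin, nsmul_eq_mul]
        · congr 1
          have : 1 ≤ p := by omega
          push_cast [Nat.cast_sub this]
          ring
        · rw [hM, if_neg (Ne.symm (Finset.ne_of_mem_erase hj)), if_pos (Or.inl rfl), habs1]
      rw [hdiag, hsum]
      have key : (1 + ((p : ℝ) - 1) * τ * |ε|) / s
          = 1 / s + ((p : ℝ) - 1) * (τ * |ε| / s) := by ring
      linarith [hσ1, key ▸ hσ1]
    · have hdiag : M i i = σ i - 1 / s := by rw [hM, if_pos rfl]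
      have h0mem : (0 : Fin p) ∈ univ.erase i :=
        Finset.mem_erase.mpr ⟨Ne.symm hi, Finset.mem_univ _⟩
      have hsum : ∑ j ∈ univ.erase i, |M i j|
          = τ * |ε| / s + ((p : ℝ) - 2) * (τ ^ 2 / s) := by
        rw [← Finset.add_sum_erase _ _ h0mem]
        congr 1
        · rw [hM, if_neg hi, if_pos (Or.inr rfl), habs1]
        · rw [Finset.sum_congr rfl (fun j hj => ?_), Finset.sum_const,
            Finset.card_erase_of_mem h0mem,
            Finset.card_erase_of_mem (Finset.mem_univ _), Finset.card_fin, nsmul_eq_mul]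
          · congr 1
            have h1 : 1 ≤ p := by omega
            have h2 : 1 ≤ p - 1 := by omega
            push_cast [Nat.cast_sub h2, Nat.cast_sub h1]
            ring
          · have hj0 : j ≠ 0 := Finset.ne_of_mem_erase hj
            have hji : j ≠ i := Finset.ne_of_mem_erase (Finset.mem_of_mem_erase hj)
            rw [hM, if_neg (Ne.symm hji), if_neg (by simp [hi, hj0]), habs2]
      rw [hdiag, hsum]
      have key : (1 + ((p : ℝ) - 2) * τ ^ 2 + τ * |ε|) / s
          = 1 / s + (τ * |ε| / s + ((p : ℝ) - 2) * (τ ^ 2 / s)) := by ring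
      linarith [hσi i hi, key ▸ hσi i hi]
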